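/- Let G be a graph constructed from a neighborhood sequence W_1,…,W_n (so each vertex k ≥ 2 is joined to exactly the vertices in W_k ⊆ [1,k-1], with W_k \ {k-1} ⊆ W_{k-1}). If {a,b} is an edge of G with a < b, then a is adjacent to every vertex c with a < c < b. -/

import Mathlib

/-- A neighborhood sequence for a non-leaping sequence `q`, on vertex set {1,…,n}. -/
structure NbhdSeq (n : ℕ) where
  q : ℕ → ℕ
  a : ℕ → ℕ
  W : ℕ → Finset ℕ
  hn : 2 ≤ n
  hq1 : q 1 = 0
  hq2 : q 2 = 1
  hq : ∀ k, 3 ≤ k → k ≤ n → 2 ≤ q k ∧ q k ≤ q (k - 1) + 1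
  hW1 : W 1 = ∅
  hW2 : W 2 = {1}
  ha2 : a 2 = 1
  hWk : ∀ k, 3 ≤ k → k ≤ n → W k = insert (a k) (Finset.Icc (k - q k + 1) (k - 1))
  hak : ∀ k, 3 ≤ k → k ≤ n → a k ∈ W (k - 1) ∧ a k < k - q k + 1

/-- The graph of a neighborhood sequence: vertex k is joined to every vertex of W k. -/
def NbhdSeq.graph {n : ℕ} (S : NbhdSeq n) : SimpleGraph ℕ where
  Adj i j := (i < j ∧ i ∈ S.W j) ∨ (j < i ∧ j ∈ S.W i)
  symm := ⟨fun i j h => Or.symm h⟩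
  loopless := ⟨fun i h => by rcases h with ⟨h, -⟩ | ⟨h, -⟩ <;> exact lt_irrefl i h⟩


lemma NbhdSeq.step {n : ℕ} (S : NbhdSeq n) (b : ℕ) (h3 : 3 ≤ b) (hbn : b ≤ n)
    (x : ℕ) (hx : x ∈ S.W b) (hlt : x < b - 1) : x ∈ S.W (b - 1) := by
  rw [S.hWk b h3 hbn] at hx
  rcases Finset.mem_insert.mp hx with h | h
  · subst h; exact (S.hak b h3 hbn).1
  · have hm := Finset.mem_Icc.mp h
    have hq := S.hq b h3 hbn
    by_cases hb3 : b = 3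
    · subst hb3
      have h2 : S.q (3 - 1) = 1 := by norm_num [S.hq2]
      omega
    · have hq' := S.hq (b - 1) (by omega) (by omega)
      rw [S.hWk (b - 1) (by omega) (by omega)]
      exact Finset.mem_insert_of_mem (Finset.mem_Icc.mpr (by omega))

lemma NbhdSeq.mem_W_of_lt {n : ℕ} (S : NbhdSeq n) (b : ℕ) (hbn : b ≤ n) :
    ∀ x c : ℕ, x ∈ S.W b → x < c → c < b → x ∈ S.W c := by
  induction b with
  | zero => intro x c _ _ h; omega
  | succ b ih =>
    intro x c hx hxc hcb
    rcases Nat.lt_or_ge (b + 1) 3 with h | h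
    · have hb : b = 0 ∨ b = 1 := by omega
      rcases hb with rfl | rfl
      · omega
      · rw [S.hW2] at hx
        have : x = 1 := Finset.mem_singleton.mp hx
        omega
    · have hstep : x ∈ S.W b := by
        have := S.step (b + 1) h hbn x hx (by omega)
        simpa using this
      rcases Nat.lt_or_eq_of_le (Nat.lt_succ_iff.mp hcb) with h' | h'
      · exact ih (by omega) x c hstep hxc h'
      · rwa [h']

/-- in a graph built from a neighborhood sequence, if {a,b} is an
edge with a < b, then a is adjacent to every c with a < c < b. -/
theorem stmt5 {n : ℕ} (S : NbhdSeq n) (a b : ℕ) (hab : a < b) (hbn : b ≤ n)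
    (hadj : S.graph.Adj a b) (c : ℕ) (hac : a < c) (hcb : c < b) :
    S.graph.Adj a c := by
  have hmem : a ∈ S.W b := by
    rcases hadj with ⟨_, h⟩ | ⟨h, _⟩
    · exact h
    · omega
  exact Or.inl ⟨hac, S.mem_W_of_lt b hbn a c hmem hac hcb⟩
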